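/- Let 𝒢=(G,λ) be a temporal graph, and let Δ,k ∈ ℕ. Let 𝒢'=(G,λ') be the temporal graph obtained from 𝒢 by inserting one edgeless snapshot after every Δ consecutive snapshots, i.e., λ'(e) = { t + ⌈t/Δ⌉ − 1 : t ∈ λ(e) } for every edge e of G. Then 𝒢 has a Δ-temporal matching of size at least k if and only if 𝒢' has a (Δ+1)-temporal matching of size at least k. -/

import Mathlib

variable {V : Type*}

/-- The underlying (static) graph of a temporal graph given by its time-labeling. -/
def ugraph (lab : Sym2 V → Finset ℕ) : SimpleGraph V where
  Adj x y := x ≠ y ∧ (lab s(x, y)).Nonempty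
  symm := by
    constructor
    intro x y h
    exact ⟨h.1.symm, by rw [Sym2.eq_swap]; exact h.2⟩
  loopless := by constructor; intro x h; exact h.1 rfl

/-- `(e, t)` is a time edge of the temporal graph given by `lab`. -/
def IsTimeEdge (lab : Sym2 V → Finset ℕ) (p : Sym2 V × ℕ) : Prop :=
  ¬ p.1.IsDiag ∧ p.2 ∈ lab p.1

/-- Two time edges are Δ-independent: edges disjoint or labels at least Δ apart. -/
def DIndep (Δ : ℕ) (p q : Sym2 V × ℕ) : Prop :=
  (∀ v, v ∈ p.1 → v ∉ q.1) ∨ Δ ≤ ((p.2 : ℤ) - (q.2 : ℤ)).natAbs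

/-- A Δ-temporal matching. -/
def IsTM (lab : Sym2 V → Finset ℕ) (Δ : ℕ) (M : Finset (Sym2 V × ℕ)) : Prop :=
  (∀ p ∈ M, IsTimeEdge lab p) ∧ ∀ p ∈ M, ∀ q ∈ M, p ≠ q → DIndep Δ p q

/-- μ_Δ: maximum cardinality of a Δ-temporal matching. -/
noncomputable def tmu (lab : Sym2 V → Finset ℕ) (Δ : ℕ) : ℕ :=
  sSup {k | ∃ M : Finset (Sym2 V × ℕ), IsTM lab Δ M ∧ M.card = k}

/-- The temporal graph has lifetime `T`. -/
def HasLifetime (lab : Sym2 V → Finset ℕ) (T : ℕ) : Prop :=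
  (∀ e, ∀ t ∈ lab e, 1 ≤ t ∧ t ≤ T) ∧ ∃ e : Sym2 V, ¬ e.IsDiag ∧ T ∈ lab e

/-- The snapshot at time `t`. -/
def tsnapshot (lab : Sym2 V → Finset ℕ) (t : ℕ) : SimpleGraph V where
  Adj x y := x ≠ y ∧ t ∈ lab s(x, y)
  symm := by
    constructor
    intro x y h
    exact ⟨h.1.symm, by rw [Sym2.eq_swap]; exact h.2⟩
  loopless := by constructor; intro x h; exact h.1 rfl

/-- 𝒢|_S : keep only time edges with label in `S`. -/
def trestrict (lab : Sym2 V → Finset ℕ) (S : Finset ℕ) : Sym2 V → Finset ℕ :=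
  fun e => lab e ∩ S

/-- A finite matching of a static graph. -/
def IsMatchingF (G : SimpleGraph V) (R : Finset (Sym2 V)) : Prop :=
  (∀ e ∈ R, e ∈ G.edgeSet) ∧ ∀ e ∈ R, ∀ e' ∈ R, e ≠ e' → ∀ v, v ∈ e → v ∉ e'

/-- ν(G): maximum cardinality of a matching. -/
noncomputable def matchNum (G : SimpleGraph V) : ℕ :=
  sSup {k | ∃ R : Finset (Sym2 V), IsMatchingF G R ∧ R.card = k}

/-- An independent set of a static graph. -/
def IsIndepF (G : SimpleGraph V) (S : Finset V) : Prop :=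
  ∀ u ∈ S, ∀ v ∈ S, ¬ G.Adj u v

/-- α(G): maximum cardinality of an independent set. -/
noncomputable def indepNum (G : SimpleGraph V) : ℕ :=
  sSup {k | ∃ S : Finset V, IsIndepF G S ∧ S.card = k}

/-- The Δ-temporal line graph: vertices are the time edges, two distinct time edges are
adjacent iff the edges share a vertex and the labels are less than Δ apart. -/
def tline (lab : Sym2 V → Finset ℕ) (Δ : ℕ) :
    SimpleGraph {p : Sym2 V × ℕ // IsTimeEdge lab p} where
  Adj p q := p ≠ q ∧ (∃ v, v ∈ p.1.1 ∧ v ∈ q.1.1) ∧ ((p.1.2 : ℤ) - (q.1.2 : ℤ)).natAbs < Δ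
  symm := by
    constructor
    rintro p q ⟨hne, ⟨v, hv1, hv2⟩, hlt⟩
    exact ⟨hne.symm, ⟨v, hv2, hv1⟩, by omega⟩
  loopless := by constructor; rintro p ⟨hne, -⟩; exact hne rfl

lemma shift_facts (Δ a b : ℕ) (hΔ : 1 ≤ Δ) (ha : 1 ≤ a) (hb : 1 ≤ b) :
    ((a + (a+Δ-1)/Δ - 1 = b + (b+Δ-1)/Δ - 1) ↔ a = b) ∧
    ((Δ ≤ ((a:ℤ) - b).natAbs) ↔
      (Δ + 1 ≤ ((↑(a + (a+Δ-1)/Δ - 1):ℤ) - ↑(b + (b+Δ-1)/Δ - 1)).natAbs)) := by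
  have h1 : 1 ≤ (a+Δ-1)/Δ := (Nat.one_le_div_iff (by omega)).2 (by omega)
  have h2 : 1 ≤ (b+Δ-1)/Δ := (Nat.one_le_div_iff (by omega)).2 (by omega)
  have h3 : a ≤ b → (a+Δ-1)/Δ ≤ (b+Δ-1)/Δ := fun h => Nat.div_le_div_right (by omega)
  have h4 : b ≤ a → (b+Δ-1)/Δ ≤ (a+Δ-1)/Δ := fun h => Nat.div_le_div_right (by omega)
  have h5 : a + Δ ≤ b → (a+Δ-1)/Δ + 1 ≤ (b+Δ-1)/Δ := by
    intro h
    calc (a+Δ-1)/Δ + 1 = (a+Δ-1+Δ)/Δ := (Nat.add_div_right _ (by omega)).symm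
    _ ≤ (b+Δ-1)/Δ := Nat.div_le_div_right (by omega)
  have h6 : b + Δ ≤ a → (b+Δ-1)/Δ + 1 ≤ (a+Δ-1)/Δ := by
    intro h
    calc (b+Δ-1)/Δ + 1 = (b+Δ-1+Δ)/Δ := (Nat.add_div_right _ (by omega)).symm
    _ ≤ (a+Δ-1)/Δ := Nat.div_le_div_right (by omega)
  have h7 : b ≤ a + Δ - 1 → (b+Δ-1)/Δ ≤ (a+Δ-1)/Δ + 1 := by
    intro h
    calc (b+Δ-1)/Δ ≤ (a+Δ-2+Δ)/Δ := Nat.div_le_div_right (by omega)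
    _ = (a+Δ-2)/Δ + 1 := Nat.add_div_right _ (by omega)
    _ ≤ (a+Δ-1)/Δ + 1 := Nat.add_le_add_right (Nat.div_le_div_right (by omega)) 1
  have h8 : a ≤ b + Δ - 1 → (a+Δ-1)/Δ ≤ (b+Δ-1)/Δ + 1 := by
    intro h
    calc (a+Δ-1)/Δ ≤ (b+Δ-2+Δ)/Δ := Nat.div_le_div_right (by omega)
    _ = (b+Δ-2)/Δ + 1 := Nat.add_div_right _ (by omega)
    _ ≤ (b+Δ-1)/Δ + 1 := Nat.add_le_add_right (Nat.div_le_div_right (by omega)) 1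
  generalize (a+Δ-1)/Δ = qa at *
  generalize (b+Δ-1)/Δ = qb at *
  omega


/-- Inserting one edgeless snapshot after every `Δ` consecutive snapshots,
i.e., replacing each label `t` by `t + ⌈t/Δ⌉ - 1`, transforms Δ-temporal matchings into
(Δ+1)-temporal matchings: 𝒢 has a Δ-temporal matching of size ≥ k iff the shifted
temporal graph has a (Δ+1)-temporal matching of size ≥ k. -/
theorem stmt2 {V : Type*} [Fintype V] [DecidableEq V]
    (lab : Sym2 V → Finset ℕ) (Δ k : ℕ) (hΔ : 1 ≤ Δ)
    (hpos : ∀ e, ∀ t ∈ lab e, 1 ≤ t) :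
    (∃ M : Finset (Sym2 V × ℕ), IsTM lab Δ M ∧ k ≤ M.card) ↔
    (∃ M : Finset (Sym2 V × ℕ),
      IsTM (fun e => (lab e).image (fun t => t + (t + Δ - 1) / Δ - 1)) (Δ + 1) M ∧
      k ≤ M.card) := by
  classical
  set f : ℕ → ℕ := fun t => t + (t + Δ - 1) / Δ - 1 with hf
  constructor
  · rintro ⟨M, ⟨hTE, hInd⟩, hk⟩
    refine ⟨M.image (fun p => (p.1, f p.2)), ⟨?_, ?_⟩, ?_⟩
    · rintro p hp
      simp only [Finset.mem_image] at hp
      obtain ⟨q, hq, rfl⟩ := hp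
      obtain ⟨hd, hm⟩ := hTE q hq
      exact ⟨hd, Finset.mem_image_of_mem _ hm⟩
    · rintro p hp q hq hne
      simp only [Finset.mem_image] at hp hq
      obtain ⟨p', hp', rfl⟩ := hp
      obtain ⟨q', hq', rfl⟩ := hq
      have hne' : p' ≠ q' := by rintro rfl; exact hne rfl
      rcases hInd p' hp' q' hq' hne' with h | h
      · exact Or.inl h
      · exact Or.inr (((shift_facts Δ p'.2 q'.2 hΔ (hpos _ _ (hTE p' hp').2)
          (hpos _ _ (hTE q' hq').2)).2).1 h)
    · refine hk.trans (le_of_eq (Finset.card_image_of_injOn ?_).symm)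
      intro p hp q hq h
      simp only [Prod.mk.injEq] at h
      have h2 := (shift_facts Δ p.2 q.2 hΔ (hpos _ _ (hTE p hp).2)
        (hpos _ _ (hTE q hq).2)).1.1 h.2
      exact Prod.ext h.1 h2
  · rintro ⟨M, ⟨hTE, hInd⟩, hk⟩
    have hpre : ∀ p ∈ M, ∃ t, t ∈ lab p.1 ∧ 1 ≤ t ∧ f t = p.2 := by
      intro p hp
      have := (hTE p hp).2
      simp only [Finset.mem_image] at this
      obtain ⟨t, ht, hft⟩ := this
      exact ⟨t, ht, hpos _ _ ht, hft⟩
    set finv : ℕ → ℕ := fun s => if h : ∃ t, 1 ≤ t ∧ f t = s then h.choose else 0 with hfinv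
    have hspec : ∀ s t, 1 ≤ t → f t = s → finv s = t := by
      intro s t ht hts
      have hex : ∃ t, 1 ≤ t ∧ f t = s := ⟨t, ht, hts⟩
      have hc := hex.choose_spec
      have he : finv s = hex.choose := dif_pos hex
      rw [he]
      exact (shift_facts Δ hex.choose t hΔ hc.1 ht).1.1 (hc.2.trans hts.symm)
    refine ⟨M.image (fun p => (p.1, finv p.2)), ⟨?_, ?_⟩, ?_⟩
    · rintro p hp
      simp only [Finset.mem_image] at hp
      obtain ⟨q, hq, rfl⟩ := hp
      obtain ⟨t, ht, ht1, hft⟩ := hpre q hq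
      rw [hspec q.2 t ht1 hft]
      exact ⟨(hTE q hq).1, ht⟩
    · rintro p hp q hq hne
      simp only [Finset.mem_image] at hp hq
      obtain ⟨p', hp', rfl⟩ := hp
      obtain ⟨q', hq', rfl⟩ := hq
      have hne' : p' ≠ q' := by rintro rfl; exact hne rfl
      rcases hInd p' hp' q' hq' hne' with h | h
      · exact Or.inl h
      · right
        obtain ⟨tp, htp, htp1, hftp⟩ := hpre p' hp'
        obtain ⟨tq, htq, htq1, hftq⟩ := hpre q' hq'
        rw [hspec p'.2 tp htp1 hftp, hspec q'.2 tq htq1 hftq]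
        refine ((shift_facts Δ tp tq hΔ htp1 htq1).2).2 ?_
        have e1 : tp + (tp+Δ-1)/Δ - 1 = f tp := rfl
        have e2 : tq + (tq+Δ-1)/Δ - 1 = f tq := rfl
        rw [e1, e2, hftp, hftq]
        exact h
    · refine hk.trans (le_of_eq (Finset.card_image_of_injOn ?_).symm)
      intro p hp q hq h
      simp only [Prod.mk.injEq] at h
      obtain ⟨tp, htp, htp1, hftp⟩ := hpre p hp
      obtain ⟨tq, htq, htq1, hftq⟩ := hpre q hq
      have h2 := h.2
      rw [hspec p.2 tp htp1 hftp, hspec q.2 tq htq1 hftq] at h2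
      refine Prod.ext h.1 ?_
      rw [← hftp, ← hftq, h2]
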